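/- The function ξ : (-∞, -1) → ℝ defined by ξ(H) = ∫_0^π (sqrt(2)·H)/sqrt(2H^2 + sin(2t) - 1) dt satisfies lim_{H → -∞} ξ(H) = -π. -/

import Mathlib

open Real Filter

lemma aux_sq : Tendsto (fun H : ℝ => H ^ 2 - 1) atBot atTop := by
  apply tendsto_atTop_add_const_right
  have h : Tendsto (fun H : ℝ => (-H) ^ 2) atBot atTop :=
    (tendsto_pow_atTop (n := 2) (by norm_num)).comp tendsto_neg_atBot_atTop
  simpa [neg_pow] using h

lemma aux_tendsto : Tendsto (fun H : ℝ => H / Real.sqrt (H ^ 2 - 1)) atBot (nhds (-1)) := by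
  have h2 : Tendsto (fun H : ℝ => 1 + 1 / (H ^ 2 - 1)) atBot (nhds 1) := by
    have := aux_sq.inv_tendsto_atTop
    have h := this.const_add (1 : ℝ)
    simpa [one_div] using h
  have h3 : Tendsto (fun H : ℝ => -Real.sqrt (1 + 1 / (H ^ 2 - 1))) atBot (nhds (-1)) := by
    have := ((Real.continuous_sqrt.tendsto 1).comp h2).neg
    simpa using this
  apply h3.congr'
  filter_upwards [eventually_le_atBot (-2 : ℝ)] with H hH
  have hH0 : H < 0 := by linarith
  have h1 : (1 : ℝ) < H ^ 2 := by nlinarith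
  have hpos : 0 < H ^ 2 - 1 := by linarith
  have hs : 0 < Real.sqrt (H ^ 2 - 1) := Real.sqrt_pos.mpr hpos
  have key : 1 + 1 / (H ^ 2 - 1) = H ^ 2 / (H ^ 2 - 1) := by
    field_simp
    ring
  rw [key, Real.sqrt_div (by positivity) _]
  rw [Real.sqrt_sq_eq_abs, abs_of_neg hH0]
  field_simp

theorem stmt_17 :
    Filter.Tendsto
      (fun H : ℝ => ∫ t in (0 : ℝ)..π,
        Real.sqrt 2 * H / Real.sqrt (2 * H ^ 2 + Real.sin (2 * t) - 1))
      Filter.atBot (nhds (-π)) := by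
  have hlow : Tendsto (fun H : ℝ => π * (H / Real.sqrt (H ^ 2 - 1))) atBot (nhds (-π)) := by
    have := aux_tendsto.const_mul π
    simpa using this
  apply tendsto_of_tendsto_of_tendsto_of_le_of_le' hlow (tendsto_const_nhds (x := (-π)))
  · -- lower bound
    filter_upwards [eventually_le_atBot (-2 : ℝ)] with H hH
    have hH0 : H < 0 := by linarith
    have h1 : (1 : ℝ) < H ^ 2 := by nlinarith
    have hpos : ∀ t : ℝ, 0 < 2 * H ^ 2 + Real.sin (2 * t) - 1 := by
      intro t
      have := Real.neg_one_le_sin (2 * t)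
      nlinarith
    have hcont : Continuous (fun t : ℝ => Real.sqrt 2 * H / Real.sqrt (2 * H ^ 2 + Real.sin (2 * t) - 1)) := by
      apply Continuous.div continuous_const
      · exact Continuous.sqrt (by continuity)
      · intro t
        exact ne_of_gt (Real.sqrt_pos.mpr (hpos t))
    have hint : IntervalIntegrable (fun t : ℝ => Real.sqrt 2 * H / Real.sqrt (2 * H ^ 2 + Real.sin (2 * t) - 1)) MeasureTheory.volume 0 π :=
      hcont.intervalIntegrable 0 π
    have hmono : ∫ t in (0:ℝ)..π, (Real.sqrt 2 * H / Real.sqrt (2 * H ^ 2 - 2)) ≤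
        ∫ t in (0:ℝ)..π, Real.sqrt 2 * H / Real.sqrt (2 * H ^ 2 + Real.sin (2 * t) - 1) := by
      apply intervalIntegral.integral_mono_on Real.pi_pos.le (intervalIntegrable_const) hint
      intro t ht
      have ha : Real.sqrt 2 * H ≤ 0 := by
        apply mul_nonpos_of_nonneg_of_nonpos (Real.sqrt_nonneg 2) hH0.le
      have hd1 : 0 < Real.sqrt (2 * H ^ 2 - 2) := by
        apply Real.sqrt_pos.mpr; nlinarith
      have hd2 : 0 < Real.sqrt (2 * H ^ 2 + Real.sin (2 * t) - 1) := Real.sqrt_pos.mpr (hpos t)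
      have hle : Real.sqrt (2 * H ^ 2 - 2) ≤ Real.sqrt (2 * H ^ 2 + Real.sin (2 * t) - 1) := by
        apply Real.sqrt_le_sqrt
        have := Real.neg_one_le_sin (2 * t); linarith
      rw [div_le_div_iff₀ hd1 hd2]
      exact mul_le_mul_of_nonpos_left hle ha
    have hconst : ∫ t in (0:ℝ)..π, (Real.sqrt 2 * H / Real.sqrt (2 * H ^ 2 - 2)) =
        π * (Real.sqrt 2 * H / Real.sqrt (2 * H ^ 2 - 2)) := by
      rw [intervalIntegral.integral_const]
      simp [mul_comm]
    have hval : Real.sqrt 2 * H / Real.sqrt (2 * H ^ 2 - 2) = H / Real.sqrt (H ^ 2 - 1) := by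
      have : (2 * H ^ 2 - 2 : ℝ) = 2 * (H ^ 2 - 1) := by ring
      rw [this, Real.sqrt_mul (by norm_num : (0:ℝ) ≤ 2)]
      rw [mul_div_mul_left _ _ (ne_of_gt (Real.sqrt_pos.mpr (by norm_num : (0:ℝ) < 2)))]
    calc π * (H / Real.sqrt (H ^ 2 - 1))
        = ∫ t in (0:ℝ)..π, (Real.sqrt 2 * H / Real.sqrt (2 * H ^ 2 - 2)) := by rw [hconst, hval]
      _ ≤ _ := hmono
  · -- upper bound
    filter_upwards [eventually_le_atBot (-2 : ℝ)] with H hH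
    have hH0 : H < 0 := by linarith
    have h1 : (1 : ℝ) < H ^ 2 := by nlinarith
    have hpos : ∀ t : ℝ, 0 < 2 * H ^ 2 + Real.sin (2 * t) - 1 := by
      intro t
      have := Real.neg_one_le_sin (2 * t)
      nlinarith
    have hcont : Continuous (fun t : ℝ => Real.sqrt 2 * H / Real.sqrt (2 * H ^ 2 + Real.sin (2 * t) - 1)) := by
      apply Continuous.div continuous_const
      · exact Continuous.sqrt (by continuity)
      · intro t
        exact ne_of_gt (Real.sqrt_pos.mpr (hpos t))
    have hint : IntervalIntegrable (fun t : ℝ => Real.sqrt 2 * H / Real.sqrt (2 * H ^ 2 + Real.sin (2 * t) - 1)) MeasureTheory.volume 0 π :=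
      hcont.intervalIntegrable 0 π
    have hmono : ∫ t in (0:ℝ)..π, Real.sqrt 2 * H / Real.sqrt (2 * H ^ 2 + Real.sin (2 * t) - 1) ≤
        ∫ t in (0:ℝ)..π, (-1 : ℝ) := by
      apply intervalIntegral.integral_mono_on Real.pi_pos.le hint (intervalIntegrable_const)
      intro t ht
      have ha : Real.sqrt 2 * H ≤ 0 :=
        mul_nonpos_of_nonneg_of_nonpos (Real.sqrt_nonneg 2) hH0.le
      have hd2 : 0 < Real.sqrt (2 * H ^ 2 + Real.sin (2 * t) - 1) := Real.sqrt_pos.mpr (hpos t)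
      have hd3 : 0 < Real.sqrt (2 * H ^ 2) := Real.sqrt_pos.mpr (by nlinarith)
      have hle : Real.sqrt (2 * H ^ 2 + Real.sin (2 * t) - 1) ≤ Real.sqrt (2 * H ^ 2) := by
        apply Real.sqrt_le_sqrt
        have := Real.sin_le_one (2 * t); linarith
      have hval : Real.sqrt 2 * H / Real.sqrt (2 * H ^ 2) = -1 := by
        rw [Real.sqrt_mul (by norm_num : (0:ℝ) ≤ 2), Real.sqrt_sq_eq_abs, abs_of_neg hH0]
        have hnH : (0:ℝ) < -H := by linarith
        rw [div_eq_iff (ne_of_gt (mul_pos (Real.sqrt_pos.mpr (by norm_num : (0:ℝ) < 2)) hnH))]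
        ring
      calc Real.sqrt 2 * H / Real.sqrt (2 * H ^ 2 + Real.sin (2 * t) - 1)
          ≤ Real.sqrt 2 * H / Real.sqrt (2 * H ^ 2) := by
            rw [div_le_div_iff₀ hd2 hd3]
            exact mul_le_mul_of_nonpos_left hle ha
        _ = -1 := hval
    calc (∫ t in (0:ℝ)..π, Real.sqrt 2 * H / Real.sqrt (2 * H ^ 2 + Real.sin (2 * t) - 1))
        ≤ ∫ t in (0:ℝ)..π, (-1 : ℝ) := hmono
      _ = -π := by simp
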